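/- Let k > 2, let ϑ : [0,∞) → ℝ be continuous (e.g. a trajectory of the pendulum ϑ̇ = v, v̇ = −sin(ϑ) − kv + u), and let δϑ, δv : [0,∞) → ℝ be differentiable functions satisfying the linearized pendulum equations δϑ'(t) = δv(t) and δv'(t) = −cos(ϑ(t)) δϑ(t) − k δv(t) for all t ≥ 0. If δϑ(0) ≥ 0 and δϑ(0) + δv(0) ≥ 0, then δϑ(t) ≥ 0 and δϑ(t) + δv(t) ≥ 0 for all t ≥ 0. That is, the polyhedral cone {(δϑ, δv) ∈ ℝ² : δϑ ≥ 0 and δϑ + δv ≥ 0} is forward invariant for the linearization of the pendulum along any trajectory. -/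

import Mathlib

open Real Set Filter Topology

private lemma pendulum_expAux (ε t : ℝ) :
    HasDerivAt (fun s => ε * Real.exp (3 * s)) (3 * (ε * Real.exp (3 * t))) t := by
  have h := ((hasDerivAt_id t).const_mul 3).exp.const_mul ε
  simp only [id] at h
  refine h.congr_deriv ?_
  ring

private lemma pendulum_eps_limit {c E : ℝ} (hE : 0 < E)
    (h : ∀ ε : ℝ, 0 < ε → 0 < c + ε * E) : 0 ≤ c := by
  by_contra hc
  push_neg at hc
  have hε : 0 < -c / E := div_pos (by linarith) hE
  have := h _ hε
  rw [div_mul_cancel₀ _ (ne_of_gt hE)] at this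
  linarith

/-- **Differential positivity of the damped pendulum (Example 4).**
Let `k > 2` and let `ϑ(·)` be a continuous curve (e.g. the angle component of a pendulum
trajectory). If `δϑ, δv` solve the linearized pendulum equations
`δϑ' = δv`, `δv' = −cos(ϑ(t)) δϑ − k δv`, and initially `δϑ(0) ≥ 0` and
`δϑ(0) + δv(0) ≥ 0`, then `δϑ(t) ≥ 0` and `δϑ(t) + δv(t) ≥ 0` for all `t ≥ 0`:
the polyhedral cone `{(δϑ, δv) : δϑ ≥ 0, δϑ + δv ≥ 0}` is forward invariant for the
linearization of the pendulum along any trajectory. -/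
theorem pendulum_cone_forward_invariant
    (k : ℝ) (hk : 2 < k)
    (ϑ : ℝ → ℝ) (hϑ : Continuous ϑ)
    (δϑ δv : ℝ → ℝ)
    (hδϑ : ∀ t, 0 ≤ t → HasDerivAt δϑ (δv t) t)
    (hδv : ∀ t, 0 ≤ t → HasDerivAt δv (-Real.cos (ϑ t) * δϑ t - k * δv t) t)
    (h0 : 0 ≤ δϑ 0) (h0' : 0 ≤ δϑ 0 + δv 0) :
    ∀ t, 0 ≤ t → 0 ≤ δϑ t ∧ 0 ≤ δϑ t + δv t := by
  have key : ∀ ε : ℝ, 0 < ε → ∀ t, 0 ≤ t →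
      0 < δϑ t + ε * Real.exp (3 * t) ∧ 0 < (δϑ t + δv t) + ε * Real.exp (3 * t) := by
    intro ε hε
    set X : ℝ → ℝ := fun s => δϑ s + ε * Real.exp (3 * s) with hXdef
    set Y : ℝ → ℝ := fun s => (δϑ s + δv s) + ε * Real.exp (3 * s) with hYdef
    have hXd : ∀ s, 0 ≤ s →
        HasDerivAt X (δv s + 3 * (ε * Real.exp (3 * s))) s :=
      fun s hs => (hδϑ s hs).add (pendulum_expAux ε s)
    have hYd : ∀ s, 0 ≤ s →
        HasDerivAt Y ((δv s + (-Real.cos (ϑ s) * δϑ s - k * δv s))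
          + 3 * (ε * Real.exp (3 * s))) s :=
      fun s hs => ((hδϑ s hs).add (hδv s hs)).add (pendulum_expAux ε s)
    by_contra hcon
    push_neg at hcon
    obtain ⟨t0, ht0, hbad⟩ := hcon
    set A : Set ℝ := {s | 0 ≤ s ∧ (X s ≤ 0 ∨ Y s ≤ 0)} with hAdef
    have hAne : A.Nonempty := by
      refine ⟨t0, ht0, ?_⟩
      by_cases h1 : 0 < X t0
      · exact Or.inr (hbad h1)
      · exact Or.inl (le_of_not_gt h1)
    have hbdd : BddBelow A := ⟨0, fun s hs => hs.1⟩
    set τ := sInf A with hτdef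
    have hτ0 : 0 ≤ τ := le_csInf hAne fun s hs => hs.1
    have hXc : ∀ s, 0 ≤ s → ContinuousAt X s := fun s hs => (hXd s hs).continuousAt
    have hYc : ∀ s, 0 ≤ s → ContinuousAt Y s := fun s hs => (hYd s hs).continuousAt
    -- at τ, one of X, Y is ≤ 0
    have hmem : X τ ≤ 0 ∨ Y τ ≤ 0 := by
      by_contra h
      push_neg at h
      obtain ⟨h1, h2⟩ := h
      have hXev : ∀ᶠ s in 𝓝 τ, 0 < X s := (hXc τ hτ0).eventually (eventually_gt_nhds h1)
      have hYev : ∀ᶠ s in 𝓝 τ, 0 < Y s := (hYc τ hτ0).eventually (eventually_gt_nhds h2)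
      obtain ⟨δ, hδ, hball⟩ := Metric.eventually_nhds_iff.1 (hXev.and hYev)
      obtain ⟨s, hsA, hslt⟩ := exists_lt_of_csInf_lt hAne (lt_add_of_pos_right τ hδ)
      have hτs : τ ≤ s := csInf_le hbdd hsA
      have : 0 < X s ∧ 0 < Y s := by
        apply hball
        rw [Real.dist_eq, abs_lt]
        constructor <;> linarith
      rcases hsA.2 with h | h <;> linarith [this.1, this.2]
    have hX0 : 0 < X 0 := by
      simp only [hXdef, mul_zero, Real.exp_zero, mul_one]
      linarith
    have hY0 : 0 < Y 0 := by
      simp only [hYdef, mul_zero, Real.exp_zero, mul_one]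
      linarith
    have hτpos : 0 < τ := by
      rcases lt_or_eq_of_le hτ0 with h | h
      · exact h
      · exfalso; rcases hmem with hm | hm <;> rw [← h] at hm <;> linarith
    -- everything strictly positive before τ
    have hpos : ∀ s, 0 ≤ s → s < τ → 0 < X s ∧ 0 < Y s := by
      intro s hs hsτ
      by_contra h
      push_neg at h
      have hsA : s ∈ A := by
        refine ⟨hs, ?_⟩
        by_cases h1 : 0 < X s
        · exact Or.inr (h h1)
        · exact Or.inl (le_of_not_gt h1)
      exact absurd (csInf_le hbdd hsA) (not_le.2 hsτ)
    have hIoo : Ioo (0:ℝ) τ ∈ 𝓝[<] τ := Ioo_mem_nhdsLT_of_mem ⟨hτpos, le_refl τ⟩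
    -- nonnegativity at τ by left limits
    have hXτ : 0 ≤ X τ := by
      have ht : Tendsto X (𝓝[<] τ) (𝓝 (X τ)) :=
        ((hXc τ hτ0).tendsto).mono_left nhdsWithin_le_nhds
      refine ge_of_tendsto ht ?_
      filter_upwards [hIoo] with s hs
      exact (hpos s hs.1.le hs.2).1.le
    have hYτ : 0 ≤ Y τ := by
      have ht : Tendsto Y (𝓝[<] τ) (𝓝 (Y τ)) :=
        ((hYc τ hτ0).tendsto).mono_left nhdsWithin_le_nhds
      refine ge_of_tendsto ht ?_
      filter_upwards [hIoo] with s hs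
      exact (hpos s hs.1.le hs.2).2.le
    have hE : 0 < Real.exp (3 * τ) := Real.exp_pos _
    -- left derivative at minimum is ≤ 0, but the vector field pushes up: contradiction
    rcases hmem with hXz | hYz
    · have hXτ0 : X τ = 0 := le_antisymm hXz hXτ
      have hslope : Tendsto (slope X τ) (𝓝[<] τ)
          (𝓝 (δv τ + 3 * (ε * Real.exp (3 * τ)))) :=
        (hasDerivAt_iff_tendsto_slope.1 (hXd τ hτ0)).mono_left
          (nhdsWithin_mono _ fun s hs => ne_of_lt hs)
      have hle : δv τ + 3 * (ε * Real.exp (3 * τ)) ≤ 0 := by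
        refine le_of_tendsto hslope ?_
        filter_upwards [hIoo] with s hs
        rw [slope_def_field, hXτ0, sub_zero]
        apply div_nonpos_of_nonneg_of_nonpos (hpos s hs.1.le hs.2).1.le
        linarith [hs.2]
      -- X τ = 0 means δϑ τ = -ε e; Y τ ≥ 0 means δv τ ≥ 0
      have h1 : δϑ τ + ε * Real.exp (3 * τ) = 0 := hXτ0
      have h2 : 0 ≤ (δϑ τ + δv τ) + ε * Real.exp (3 * τ) := hYτ
      nlinarith [mul_pos hε hE]
    · have hYτ0 : Y τ = 0 := le_antisymm hYz hYτ
      have hslope : Tendsto (slope Y τ) (𝓝[<] τ)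
          (𝓝 ((δv τ + (-Real.cos (ϑ τ) * δϑ τ - k * δv τ))
            + 3 * (ε * Real.exp (3 * τ)))) :=
        (hasDerivAt_iff_tendsto_slope.1 (hYd τ hτ0)).mono_left
          (nhdsWithin_mono _ fun s hs => ne_of_lt hs)
      have hle : (δv τ + (-Real.cos (ϑ τ) * δϑ τ - k * δv τ))
          + 3 * (ε * Real.exp (3 * τ)) ≤ 0 := by
        refine le_of_tendsto hslope ?_
        filter_upwards [hIoo] with s hs
        rw [slope_def_field, hYτ0, sub_zero]
        apply div_nonpos_of_nonneg_of_nonpos (hpos s hs.1.le hs.2).2.le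
        linarith [hs.2]
      have h1 : (δϑ τ + δv τ) + ε * Real.exp (3 * τ) = 0 := hYτ0
      have h2 : 0 ≤ δϑ τ + ε * Real.exp (3 * τ) := hXτ
      have hc1 : Real.cos (ϑ τ) ≤ 1 := Real.cos_le_one _
      have hc2 : -1 ≤ Real.cos (ϑ τ) := Real.neg_one_le_cos _
      nlinarith [mul_pos hε hE, mul_nonneg (mul_pos hε hE).le (sub_nonneg.2 hc2)]
    -- end key
  intro t ht
  have hE : 0 < Real.exp (3 * t) := Real.exp_pos _
  constructor
  · exact pendulum_eps_limit hE fun ε hε => (key ε hε t ht).1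
  · exact pendulum_eps_limit hE fun ε hε => (key ε hε t ht).2
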